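/- Let N ≥ 1, K a field of characteristic zero, s ∈ K invertible, q = s², and let R(q) = 1 + Σ_{k,l} [(q - q⁻¹)·θ(l-k) + ((s - s⁻¹)²/2)·δ_{k,l}]·E_{k,l} ⊗ E_{l,k} be the quantum trigonometric R-matrix. Let R(q)^{t₁} denote the partial transpose in the first tensor factor: (M^{t₁})_{(i,k),(j,l)} = M_{(j,k),(i,l)}. Then R(q) and R(q)^{t₁} commute: R(q)·R(q)^{t₁} = R(q)^{t₁}·R(q). Similarly R(q) commutes with R(q)^{t₂}. -/

import Mathlib

open Matrix Kronecker

/-- The step function θ with values in a field: θ(x)=1 for x>0, θ(0)=1/2, θ(x)=0 for x<0. -/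
noncomputable def thetaK (K : Type*) [Field K] (x : ℤ) : K :=
  if 0 < x then 1 else if x = 0 then 2⁻¹ else 0

/-- The quantum trigonometric R-matrix
`R(q) = 1 + Σ_{k,l} [(q-q⁻¹)θ(l-k) + ((s-s⁻¹)²/2)δ_{k,l}]·E_{k,l} ⊗ E_{l,k}`, with `q = s²`. -/
noncomputable def Rq (N : ℕ) (K : Type*) [Field K] (q s : K) :
    Matrix (Fin N × Fin N) (Fin N × Fin N) K :=
  1 + ∑ k : Fin N, ∑ l : Fin N,
    ((q - q⁻¹) * thetaK K ((l : ℤ) - (k : ℤ))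
        + (s - s⁻¹) ^ 2 / 2 * (if k = l then 1 else 0)) •
      (Matrix.single k l (1 : K) ⊗ₖ Matrix.single l k (1 : K))

/-- Partial transpose in the first tensor factor: `(M^{t₁})_{(i,k),(j,l)} = M_{(j,k),(i,l)}`. -/
def pt1 {N : ℕ} {K : Type*} [Field K]
    (M : Matrix (Fin N × Fin N) (Fin N × Fin N) K) :
    Matrix (Fin N × Fin N) (Fin N × Fin N) K :=
  Matrix.of fun p q => M (q.1, p.2) (p.1, q.2)

/-- Partial transpose in the second tensor factor: `(M^{t₂})_{(i,k),(j,l)} = M_{(i,l),(j,k)}`. -/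
def pt2 {N : ℕ} {K : Type*} [Field K]
    (M : Matrix (Fin N × Fin N) (Fin N × Fin N) K) :
    Matrix (Fin N × Fin N) (Fin N × Fin N) K :=
  Matrix.of fun p q => M (p.1, q.2) (q.1, p.2)

/-- The scalar coefficient of `E_{k,l} ⊗ E_{l,k}` in `Rq`. -/
noncomputable def cf {N : ℕ} (K : Type*) [Field K] (q s : K) (k l : Fin N) : K :=
  (q - q⁻¹) * thetaK K ((l : ℤ) - (k : ℤ)) + (s - s⁻¹) ^ 2 / 2 * (if k = l then 1 else 0)

lemma cf_diag {N : ℕ} (K : Type*) [Field K] (q s : K) (k l : Fin N) :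
    cf K q s k k = cf K q s l l := by
  simp [cf, thetaK]

theorem Rq_apply {N : ℕ} (K : Type*) [Field K] (q s : K) (a b c d : Fin N) :
    Rq N K q s (a,b) (c,d) =
      (if a = c ∧ b = d then 1 else 0) + (if b = c ∧ a = d then cf K q s a b else 0) := by
  simp only [Rq, cf, Matrix.add_apply, Matrix.sum_apply, Matrix.smul_apply,
    Matrix.kroneckerMap_apply, Matrix.single, Matrix.one_apply, Matrix.of_apply,
    Prod.mk.injEq, smul_eq_mul, mul_ite, mul_one, mul_zero, ite_and]
  congr 1
  have h : ∀ k l : Fin N,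
      (if k = a then if l = c then if l = b then if k = d then
          (q - q⁻¹) * thetaK K ((l : ℤ) - (k : ℤ)) + (s - s⁻¹) ^ 2 / 2 * (if k = l then 1 else 0)
        else 0 else 0 else 0 else 0)
      = if k = a then if l = b then (if b = c then if a = d then
          (q - q⁻¹) * thetaK K ((b : ℤ) - (a : ℤ)) + (s - s⁻¹) ^ 2 / 2 * (if a = b then 1 else 0)
        else 0 else 0) else 0 else 0 := by
    intro k l
    split_ifs <;> simp_all
  simp only [h, Finset.sum_ite_eq', Finset.mem_univ, if_true]
  clear h
  split_ifs <;> subst_vars <;> simp_all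

set_option maxHeartbeats 2000000 in
/-- `R(q)` commutes with its partial transposes `R(q)^{t₁}` and `R(q)^{t₂}`. -/
theorem Rq_commutes_partial_transposes (N : ℕ) (hN : 1 ≤ N)
    (K : Type*) [Field K] [CharZero K] (s : K) (hs : s ≠ 0) (q : K) (hq : q = s ^ 2) :
    Rq N K q s * pt1 (Rq N K q s) = pt1 (Rq N K q s) * Rq N K q s ∧
      Rq N K q s * pt2 (Rq N K q s) = pt2 (Rq N K q s) * Rq N K q s := by
  clear hq hs hN
  constructor <;>
  · ext ⟨a,b⟩ ⟨e,f⟩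
    simp only [Matrix.mul_apply, pt1, pt2, Matrix.of_apply, Rq_apply, Fintype.sum_prod_type]
    simp only [add_mul, mul_add, ite_mul, mul_ite, zero_mul, mul_zero, one_mul, mul_one,
      Finset.sum_add_distrib, ite_and, Finset.sum_ite_eq, Finset.sum_ite_eq',
      Finset.mem_univ, if_true, Finset.sum_ite_irrel, Finset.sum_const_zero]
    have hd := cf_diag K q s a e
    by_cases hab : a = b <;> by_cases hef : e = f <;> subst_vars <;>
      split_ifs <;> subst_vars <;>
        first
          | ring1
          | (rw [hd]; ring1)
          | (rw [← hd]; ring1)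
          | simp_all
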